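/- arXiv:1812.10904 — 4 statements merged into one kernel-verified Lean document; each statement's English description precedes it below -/
import Mathlib

section
/- Let F be an algebraically closed field of characteristic 2 and let f = x_1^2 x_3 + x_1 x_2 x_4 + x_2^3 + x_4^2 ∈ F[x_1,x_2,x_3,x_4]. Then the singular locus of the hypersurface {f = 0} in affine 4-space over F, i.e. the set of points e ∈ F^4 with f(e) = 0 and all four partial derivatives of f vanishing at e, is exactly {(0,0,a,0) : a ∈ F}; in particular the singular locus of the quotient variety V_3/C_4 is isomorphic to the affine line A^1_F. -/
open MvPolynomial

set_option synthInstance.maxHeartbeats 1000000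
set_option maxHeartbeats 1000000

noncomputable section

variable (F : Type) [Field F]

/-- The invariant ring (fixed subalgebra) of the algebra endomorphism `σ`;
for `σ` the action of a generator of a finite cyclic group, this is the
ring of invariants of that group. -/
def inva {n : ℕ} (σ : MvPolynomial (Fin n) F →ₐ[F] MvPolynomial (Fin n) F) :
    Subalgebra F (MvPolynomial (Fin n) F) :=
  AlgHom.equalizer σ (AlgHom.id F _)

/-- The linear substitution action of a matrix on the polynomial ring. -/
def matAct {n : ℕ} (M : Matrix (Fin n) (Fin n) F) :
    MvPolynomial (Fin n) F →ₐ[F] MvPolynomial (Fin n) F :=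
  aeval fun i => ∑ j, C (M i j) * X j

/-- The irrelevant (maximal graded) ideal of a graded subalgebra of a
polynomial ring: elements with vanishing constant term. -/
def mmax {n : ℕ} (A : Subalgebra F (MvPolynomial (Fin n) F)) : Ideal A :=
  RingHom.ker ((constantCoeff : MvPolynomial (Fin n) F →+* F).comp A.val.toRingHom)

/-- A graded subalgebra of a polynomial ring is Cohen-Macaulay iff there
is a regular sequence in the irrelevant maximal ideal whose length is the
Krull dimension (i.e. depth = dimension). -/
def IsCM {n : ℕ} (A : Subalgebra F (MvPolynomial (Fin n) F)) : Prop :=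
  ∃ rs : List A, (∀ r ∈ rs, r ∈ mmax F A) ∧ RingTheory.Sequence.IsRegular (↥A) rs ∧
    (rs.length : WithBot ℕ∞) = ringKrullDim ↥A

/-- Gorenstein: Cohen-Macaulay, with one-dimensional socle modulo a maximal
regular sequence (a homogeneous system of parameters). -/
def IsGor {n : ℕ} (A : Subalgebra F (MvPolynomial (Fin n) F)) : Prop :=
  ∃ rs : List A, (∀ r ∈ rs, r ∈ mmax F A) ∧ RingTheory.Sequence.IsRegular (↥A) rs ∧
    (rs.length : WithBot ℕ∞) = ringKrullDim ↥A ∧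
    Module.finrank F (Submodule.restrictScalars F
      ((⊥ : Ideal (↥A ⧸ Ideal.span {x : ↥A | x ∈ rs})).colon
        ((mmax F A).map (Ideal.Quotient.mk (Ideal.span {x : ↥A | x ∈ rs}))))) = 1

/-- A commutative `F`-algebra is a hypersurface if it is isomorphic to a
polynomial ring modulo a single principal ideal. -/
def IsHypersurface (A : Type) [CommRing A] [Algebra F A] : Prop :=
  ∃ (m : ℕ) (f : MvPolynomial (Fin m) F),
    Nonempty (A ≃ₐ[F] (MvPolynomial (Fin m) F ⧸ Ideal.span {f}))

/-- Similarity (conjugacy) of square matrices, i.e. isomorphism of the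
corresponding representations. -/
def MatSimilar {n : ℕ} (M N : Matrix (Fin n) (Fin n) F) : Prop :=
  ∃ P : (Matrix (Fin n) (Fin n) F)ˣ,
    (P : Matrix (Fin n) (Fin n) F) * M * ((P⁻¹ : (Matrix (Fin n) (Fin n) F)ˣ) :
      Matrix (Fin n) (Fin n) F) = N

/-- The representation given by `M` has a direct summand isomorphic to the
one-dimensional trivial representation. -/
def HasTrivialSummand {n : ℕ} (M : Matrix (Fin n) (Fin n) F) : Prop :=
  ∃ v : Fin n → F, v ≠ 0 ∧ M.mulVec v = v ∧
    ∃ Uc : Submodule F (Fin n → F), IsCompl (Submodule.span F {v}) Uc ∧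
      ∀ u ∈ Uc, M.mulVec u ∈ Uc

/-- A representation is reduced if no indecomposable direct summand is the
one-dimensional trivial representation. -/
def Reduced {n : ℕ} (M : Matrix (Fin n) (Fin n) F) : Prop :=
  ¬ HasTrivialSummand F M

/-- Matrix consisting of Jordan-like blocks: diagonal entries given by `d`,
with subdiagonal entries `1` exactly at the columns in `ones`. -/
def jmat (n : ℕ) (d : ℕ → F) (ones : Finset ℕ) : Matrix (Fin n) (Fin n) F :=
  fun i j => if (i : ℕ) = j then d i else
    if (i : ℕ) = (j : ℕ) + 1 ∧ (j : ℕ) ∈ ones then 1 else 0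


/-- The defining equation of the hypersurface `V₃/C₄` in `𝔸⁴`. -/
def fV3 : MvPolynomial (Fin 4) F :=
  X 0 ^ 2 * X 2 + X 0 * X 1 * X 3 + X 1 ^ 3 + X 3 ^ 2

/-- the singular locus of `{f = 0} = V₃/C₄` is exactly
`{(0,0,a,0) : a ∈ F}`, which is isomorphic to the affine line. -/
theorem stmt3 [IsAlgClosed F] [CharP F 2] :
    {e : Fin 4 → F | eval e (fV3 F) = 0 ∧ ∀ i, eval e (pderiv i (fV3 F)) = 0} =
      {e : Fin 4 → F | ∃ a : F, e = ![0, 0, a, 0]} ∧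
    Nonempty
      ({e : Fin 4 → F | eval e (fV3 F) = 0 ∧ ∀ i, eval e (pderiv i (fV3 F)) = 0} ≃ F) := by
  have h2 : (2 : F) = 0 := by exact_mod_cast CharP.cast_eq_zero F 2
  have h3 : (3 : F) = 1 := by rw [show (3:F) = 2 + 1 by norm_num, h2, zero_add]
  have hkey : {e : Fin 4 → F | eval e (fV3 F) = 0 ∧ ∀ i, eval e (pderiv i (fV3 F)) = 0} =
      {e : Fin 4 → F | ∃ a : F, e = ![0, 0, a, 0]} := by
    ext e
    simp only [Set.mem_setOf_eq]
    constructor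
    · rintro ⟨hf, hd⟩
      have hd1 := hd 1; have hd2 := hd 2
      simp [fV3, pderiv_mul, pderiv_pow, h2, h3] at hf hd1 hd2
      have he1 : e 1 = 0 := by
        rw [hd2, mul_zero, zero_add, pow_eq_zero_iff (by norm_num)] at hd1
        exact hd1
      have he3 : e 3 = 0 := by
        rw [hd2, he1] at hf
        simpa [pow_eq_zero_iff] using hf
      refine ⟨e 2, funext fun i => ?_⟩
      fin_cases i <;> simp [hd2, he1, he3]
    · rintro ⟨a, rfl⟩
      constructor
      · simp [fV3, h2]
      · intro i
        fin_cases i <;> simp [fV3, pderiv_mul, pderiv_pow, h2, h3]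
  refine ⟨hkey, ⟨(Equiv.setCongr hkey).trans ?_⟩⟩
  exact
    { toFun := fun e => e.1 2
      invFun := fun a => ⟨![0, 0, a, 0], a, rfl⟩
      left_inv := by
        rintro ⟨e, a, rfl⟩
        simp
      right_inv := fun a => rfl }

end
end

section
/- Let F be an algebraically closed field of characteristic 2 and let g = u^2 + x_1 x_2 u + x_1^2 n_2 + x_2^2 n_1 ∈ F[x_1, x_2, n_1, n_2, u]. Then the singular locus of the hypersurface {g = 0} in affine 5-space over F, i.e. the set of points e ∈ F^5 with g(e) = 0 and all five partial derivatives of g vanishing at e, is exactly {(0,0,a,b,0) : a,b ∈ F}; in particular the singular locus of the quotient variety (V_2 ⊕ V_2)/C_4 is isomorphic to the affine plane A^2_F. -/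
open MvPolynomial

set_option synthInstance.maxHeartbeats 1000000
set_option maxHeartbeats 1000000

noncomputable section

variable (F : Type) [Field F]

/-- The defining equation of the hypersurface `(V₂ ⊕ V₂)/C₄` in `𝔸⁵`,
in the variables `x₁, x₂, n₁, n₂, u`. -/
def gV22 : MvPolynomial (Fin 5) F :=
  X 4 ^ 2 + X 0 * X 1 * X 4 + X 0 ^ 2 * X 3 + X 1 ^ 2 * X 2

/-- the singular locus of `{g = 0} = (V₂ ⊕ V₂)/C₄` is exactly
`{(0,0,a,b,0) : a, b ∈ F}`, which is isomorphic to the affine plane. -/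
theorem stmt4 [IsAlgClosed F] [CharP F 2] :
    {e : Fin 5 → F | eval e (gV22 F) = 0 ∧ ∀ i, eval e (pderiv i (gV22 F)) = 0} =
      {e : Fin 5 → F | ∃ a b : F, e = ![0, 0, a, b, 0]} ∧
    Nonempty
      ({e : Fin 5 → F | eval e (gV22 F) = 0 ∧ ∀ i, eval e (pderiv i (gV22 F)) = 0}
        ≃ (F × F)) := by
  have hset : {e : Fin 5 → F | eval e (gV22 F) = 0 ∧ ∀ i, eval e (pderiv i (gV22 F)) = 0} =
      {e : Fin 5 → F | ∃ a b : F, e = ![0, 0, a, b, 0]} := by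
    ext e
    constructor
    · rintro ⟨hg, hd⟩
      have h3 := hd 3
      have h2 := hd 2
      simp [gV22, pderiv_mul, pderiv_pow] at h3 h2
      refine ⟨e 2, e 3, ?_⟩
      have h4 : e 4 = 0 := by
        simp [gV22, h2, h3] at hg
        exact hg
      funext i
      fin_cases i <;> simp [h2, h3, h4]
    · rintro ⟨a, b, rfl⟩
      constructor
      · simp [gV22]
      · intro i
        fin_cases i <;> simp [gV22, pderiv_mul, pderiv_pow]
  refine ⟨hset, ⟨?_⟩⟩
  refine
    { toFun := fun e => (e.1 2, e.1 3)
      invFun := fun p => ⟨![0, 0, p.1, p.2, 0], by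
        rw [hset]; exact ⟨p.1, p.2, rfl⟩⟩
      left_inv := ?_
      right_inv := ?_ }
  · rintro ⟨e, he⟩
    rw [hset] at he
    obtain ⟨a, b, rfl⟩ := he
    simp
  · rintro ⟨a, b⟩
    simp

end
end

section
/- Let p > 2 be a prime, F an algebraically closed field of characteristic p, and W a reduced representation of C_{2p} over F such that F[W]^{C_{2p}} is Cohen-Macaulay. If dim W = 2, then W is isomorphic to one of V_2^+, 2V_1^-, V_2^-. If dim W = 3, then W is isomorphic to one of V_2^+ ⊕ V_1^-, V_3^+, 3V_1^-, V_3^-, V_2^- ⊕ V_1^-. -/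
open MvPolynomial

set_option synthInstance.maxHeartbeats 1000000
set_option maxHeartbeats 1000000

noncomputable section

variable (F : Type) [Field F]

namespace Stmt6Aux
variable {F}
open Matrix Module Submodule

lemma mat_eq_zero_of_mulVec {n : ℕ} {N : Matrix (Fin n) (Fin n) F}
    (h : ∀ v, N.mulVec v = 0) : N = 0 := by
  ext i j
  classical
  have := congrFun (h (Pi.single j 1)) i
  rw [Matrix.mulVec_single] at this
  simpa using this

lemma exists_mulVec_ne {n : ℕ} {N : Matrix (Fin n) (Fin n) F} (h : N ≠ 0) :
    ∃ v, N.mulVec v ≠ 0 := by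
  by_contra hc
  push_neg at hc
  exact h (mat_eq_zero_of_mulVec hc)

lemma sim_of {n : ℕ} [NeZero n] (M N : Matrix (Fin n) (Fin n) F) (q : Fin n → Fin n → F)
    (hq : LinearIndependent F q)
    (hrel : ∀ j, M.mulVec (q j) = ∑ k, N k j • q k) : MatSimilar F M N := by
  classical
  have hcard : Fintype.card (Fin n) = Module.finrank F (Fin n → F) := by simp
  let b : Basis (Fin n) F (Fin n → F) := basisOfLinearIndependentOfCardEqFinrank hq hcard
  have hb : ⇑b = q := coe_basisOfLinearIndependentOfCardEqFinrank hq hcard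
  set Q : Matrix (Fin n) (Fin n) F := (Pi.basisFun F (Fin n)).toMatrix b with hQdef
  have hQ : ∀ i j, Q i j = q j i := by
    intro i j
    rw [hQdef, Basis.toMatrix_apply, Pi.basisFun_repr, hb]
  have hinv : Invertible Q := (Pi.basisFun F (Fin n)).invertibleToMatrix b
  have hQu : IsUnit Q := isUnit_of_invertible Q
  have hMQ : M * Q = Q * N := by
    ext i j
    rw [Matrix.mul_apply, Matrix.mul_apply]
    have h1 := congrFun (hrel j) i
    rw [Matrix.mulVec, dotProduct] at h1
    calc ∑ k, M i k * Q k j = ∑ k, M i k * q j k := by simp [hQ]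
    _ = (∑ k, N k j • q k) i := h1
    _ = ∑ k, Q i k * N k j := by
        rw [Finset.sum_apply]
        exact Finset.sum_congr rfl fun k _ => by rw [Pi.smul_apply, smul_eq_mul, hQ, mul_comm]
  obtain ⟨u, hu⟩ := hQu
  refine ⟨u⁻¹, ?_⟩
  have h1 : ((u⁻¹ : (Matrix (Fin n) (Fin n) F)ˣ) : Matrix (Fin n) (Fin n) F) * Q = 1 := by
    rw [← hu]; exact u.inv_mul
  calc (↑u⁻¹ : Matrix (Fin n) (Fin n) F) * M * ↑(u⁻¹)⁻¹
      = ↑u⁻¹ * (M * Q) := by rw [inv_inv, hu, mul_assoc]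
    _ = (↑u⁻¹ * Q) * N := by rw [hMQ, mul_assoc]
    _ = N := by rw [h1, one_mul]

lemma indep2 {n : ℕ} (x y : Fin n → F)
    (h : ∀ a b : F, a • x + b • y = 0 → a = 0 ∧ b = 0) :
    LinearIndependent F ![x, y] := by
  rw [Fintype.linearIndependent_iff]
  intro g hg
  rw [Fin.sum_univ_two] at hg
  simp only [Matrix.cons_val_zero, Matrix.cons_val_one, Matrix.head_cons] at hg
  have := h (g 0) (g 1) hg
  intro i; fin_cases i
  · exact this.1
  · exact this.2

lemma indep3 {n : ℕ} (x y z : Fin n → F)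
    (h : ∀ a b c : F, a • x + b • y + c • z = 0 → a = 0 ∧ b = 0 ∧ c = 0) :
    LinearIndependent F ![x, y, z] := by
  rw [Fintype.linearIndependent_iff]
  intro g hg
  rw [Fin.sum_univ_three] at hg
  simp only [Matrix.cons_val_zero, Matrix.cons_val_one, Matrix.head_cons,
    Matrix.cons_val_two, Matrix.tail_cons] at hg
  have := h (g 0) (g 1) (g 2) hg
  intro i; fin_cases i
  · exact this.1
  · exact this.2.1
  · exact this.2.2

lemma isCompl_triple (x y z : Fin 3 → F) (h : LinearIndependent F ![x, y, z]) :
    IsCompl (Submodule.span F {x}) (Submodule.span F {y, z}) := by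
  have hcard : Fintype.card (Fin 3) = Module.finrank F (Fin 3 → F) := by simp
  let b : Basis (Fin 3) F (Fin 3 → F) := basisOfLinearIndependentOfCardEqFinrank h hcard
  have hb : ⇑b = ![x, y, z] := coe_basisOfLinearIndependentOfCardEqFinrank h hcard
  constructor
  · rw [Submodule.disjoint_def]
    intro u hu1 hu2
    obtain ⟨a, rfl⟩ := Submodule.mem_span_singleton.mp hu1
    obtain ⟨c, d, hcd⟩ := Submodule.mem_span_pair.mp hu2
    have h0 : a • x + (-c) • y + (-d) • z = 0 := by
      rw [neg_smul, neg_smul, ← hcd]; abel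
    have := Fintype.linearIndependent_iff.mp h ![a, -c, -d] (by
      rw [Fin.sum_univ_three]
      simpa using h0)
    have ha := this 0
    simp at ha
    rw [ha, zero_smul]
  · rw [codisjoint_iff, eq_top_iff]
    have hspan : Submodule.span F (Set.range ![x, y, z]) = ⊤ := by
      rw [← hb, b.span_eq]
    rw [← hspan, Submodule.span_le]
    rintro u ⟨i, rfl⟩
    fin_cases i
    · apply Submodule.mem_sup_left
      exact Submodule.mem_span_singleton_self _
    · apply Submodule.mem_sup_right
      exact Submodule.subset_span (by simp)
    · apply Submodule.mem_sup_right
      exact Submodule.subset_span (by simp)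

-- basic mulVec facts for C := M - s•1
lemma mulVec_decomp {n : ℕ} (M : Matrix (Fin n) (Fin n) F) (s : F) (x : Fin n → F) :
    M.mulVec x = s • x + (M - s • 1).mulVec x := by
  rw [Matrix.sub_mulVec, Matrix.smul_mulVec, Matrix.one_mulVec]
  abel

lemma sim2_jordan (M : Matrix (Fin 2) (Fin 2) F) (s : F)
    (h2 : (M - s • 1) ^ 2 = 0) (hne : M - s • 1 ≠ 0) :
    MatSimilar F M (jmat F 2 (fun _ => s) {0}) := by
  haveI : NeZero (2 : ℕ) := ⟨by norm_num⟩
  set C := M - s • 1 with hC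
  have hM : M = C + s • 1 := by rw [hC]; abel
  obtain ⟨v, hv⟩ := exists_mulVec_ne hne
  have hC2 : ∀ x, C.mulVec (C.mulVec x) = 0 := by
    intro x
    rw [Matrix.mulVec_mulVec, ← pow_two, h2, Matrix.zero_mulVec]
  apply sim_of M _ ![v, C.mulVec v]
  · apply indep2
    intro a b hab
    have h1 := congrArg C.mulVec hab
    rw [Matrix.mulVec_add, Matrix.mulVec_smul, Matrix.mulVec_smul, hC2, smul_zero,
      add_zero, Matrix.mulVec_zero] at h1
    have ha : a = 0 := by
      rcases smul_eq_zero.mp h1 with h | h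
      · exact h
      · exact absurd h hv
    refine ⟨ha, ?_⟩
    rw [ha, zero_smul, zero_add] at hab
    rcases smul_eq_zero.mp hab with h | h
    · exact h
    · exact absurd h hv
  · intro j
    fin_cases j
    · show M.mulVec v = _
      rw [Fin.sum_univ_two]
      norm_num [jmat, -Matrix.mulVec_fin_two]
      rw [mulVec_decomp M s v, ← hC]
    · show M.mulVec (C.mulVec v) = _
      rw [Fin.sum_univ_two]
      norm_num [jmat, -Matrix.mulVec_fin_two]
      calc (M * C).mulVec v = ((C : Matrix (Fin 2) (Fin 2) F) ^ 2 + s • C).mulVec v := by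
            nth_rewrite 1 [hM]
            rw [add_mul, Matrix.smul_mul, one_mul, pow_two]
        _ = s • C.mulVec v := by
            rw [h2, zero_add, Matrix.smul_mulVec]

lemma sim3_jordan_full (M : Matrix (Fin 3) (Fin 3) F) (s : F)
    (h3 : (M - s • 1) ^ 3 = 0) (hne : (M - s • 1) ^ 2 ≠ 0) :
    MatSimilar F M (jmat F 3 (fun _ => s) {0, 1}) := by
  haveI : NeZero (3 : ℕ) := ⟨by norm_num⟩
  obtain ⟨v, hv⟩ := exists_mulVec_ne hne
  set C := M - s • 1 with hC
  have hv2 : C.mulVec (C.mulVec v) = (C ^ 2).mulVec v := by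
    rw [Matrix.mulVec_mulVec, ← pow_two]
  have hC3 : ∀ x, C.mulVec ((C ^ 2).mulVec x) = 0 := by
    intro x
    rw [Matrix.mulVec_mulVec, ← pow_succ', h3, Matrix.zero_mulVec]
  apply sim_of M _ ![v, C.mulVec v, (C ^ 2).mulVec v]
  · apply indep3
    intro a b c habc
    have h1 := congrArg C.mulVec habc
    rw [Matrix.mulVec_add, Matrix.mulVec_add, Matrix.mulVec_smul, Matrix.mulVec_smul,
      Matrix.mulVec_smul, hv2, hC3, smul_zero, add_zero, Matrix.mulVec_zero] at h1
    have h2 := congrArg C.mulVec h1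
    rw [Matrix.mulVec_add, Matrix.mulVec_smul, Matrix.mulVec_smul, hv2, hC3, smul_zero,
      add_zero, Matrix.mulVec_zero] at h2
    have ha : a = 0 := by
      rcases smul_eq_zero.mp h2 with h | h
      · exact h
      · exact absurd h hv
    rw [ha, zero_smul, zero_add] at h1
    have hb : b = 0 := by
      rcases smul_eq_zero.mp h1 with h | h
      · exact h
      · exact absurd h hv
    rw [ha, hb, zero_smul, zero_smul, zero_add, zero_add] at habc
    have hc : c = 0 := by
      rcases smul_eq_zero.mp habc with h | h
      · exact h
      · exact absurd h hv
    exact ⟨ha, hb, hc⟩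
  · intro j
    fin_cases j
    · show M.mulVec v = _
      rw [Fin.sum_univ_three]
      norm_num [jmat]
      rw [mulVec_decomp M s v, ← hC]
    · show M.mulVec (C.mulVec v) = _
      rw [Fin.sum_univ_three]
      norm_num [jmat]
      have hM : M = C + s • 1 := by rw [hC]; abel
      calc (M * C).mulVec v = ((C : Matrix (Fin 3) (Fin 3) F) ^ 2 + s • C).mulVec v := by
            nth_rewrite 1 [hM]
            rw [add_mul, Matrix.smul_mul, one_mul, pow_two]
        _ = s • C.mulVec v + (C ^ 2).mulVec v := by
            rw [Matrix.add_mulVec, Matrix.smul_mulVec, add_comm]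
    · show M.mulVec ((C ^ 2).mulVec v) = _
      rw [Fin.sum_univ_three]
      norm_num [jmat]
      have hM : M = C + s • 1 := by rw [hC]; abel
      calc (M * C ^ 2).mulVec v = ((C : Matrix (Fin 3) (Fin 3) F) ^ 3 + s • C ^ 2).mulVec v := by
            nth_rewrite 1 [hM]
            rw [add_mul, Matrix.smul_mul, one_mul, ← pow_succ']
        _ = s • (C ^ 2).mulVec v := by rw [h3, zero_add, Matrix.smul_mulVec]


/-- find `w` in `ker C` outside the line spanned by `C *ᵥ v`, when `C ≠ 0`, `C ^ 2 = 0`. -/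
lemma exists_ker_vec (M : Matrix (Fin 3) (Fin 3) F) (C : Matrix (Fin 3) (Fin 3) F)
    (h2 : C ^ 2 = 0) {v : Fin 3 → F} (hv : C.mulVec v ≠ 0) :
    ∃ w, C.mulVec w = 0 ∧ w ∉ Submodule.span F {C.mulVec v} := by
  have hrk := LinearMap.finrank_range_add_finrank_ker C.mulVecLin
  have hsub : LinearMap.range C.mulVecLin ≤ LinearMap.ker C.mulVecLin := by
    rintro x ⟨y, rfl⟩
    simp only [LinearMap.mem_ker, Matrix.mulVecLin_apply, Matrix.mulVec_mulVec, ← pow_two, h2,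
      Matrix.zero_mulVec]
  have hmono := Submodule.finrank_mono hsub
  have hfr3 : Module.finrank F (Fin 3 → F) = 3 := by simp
  have hspan1 : Module.finrank F (Submodule.span F {C.mulVec v}) = 1 :=
    finrank_span_singleton hv
  have hnle : ¬ (LinearMap.ker C.mulVecLin ≤ Submodule.span F {C.mulVec v}) := by
    intro hle
    have := Submodule.finrank_mono hle
    omega
  obtain ⟨w, hwker, hwns⟩ := SetLike.not_le_iff_exists.mp hnle
  exact ⟨w, by simpa using LinearMap.mem_ker.mp hwker, hwns⟩

lemma indep_nilp2 (C : Matrix (Fin 3) (Fin 3) F) {v w : Fin 3 → F}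
    (hv : C.mulVec v ≠ 0) (hv2 : C.mulVec (C.mulVec v) = 0)
    (hw : C.mulVec w = 0) (hwns : w ∉ Submodule.span F {C.mulVec v}) :
    ∀ a b c : F, a • v + b • (C.mulVec v) + c • w = 0 → a = 0 ∧ b = 0 ∧ c = 0 := by
  intro a b c habc
  have h1 := congrArg C.mulVec habc
  rw [Matrix.mulVec_add, Matrix.mulVec_add, Matrix.mulVec_smul, Matrix.mulVec_smul,
    Matrix.mulVec_smul, hv2, hw, smul_zero, smul_zero, add_zero, add_zero,
    Matrix.mulVec_zero] at h1
  have ha : a = 0 := by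
    rcases smul_eq_zero.mp h1 with h | h
    · exact h
    · exact absurd h hv
  rw [ha, zero_smul, zero_add] at habc
  have hc : c = 0 := by
    by_contra hc0
    apply hwns
    have h4 : c • w = -(b • C.mulVec v) := eq_neg_of_add_eq_zero_right habc
    have h5 : w = (-(c⁻¹ * b)) • C.mulVec v := by
      have := congrArg (fun x => c⁻¹ • x) h4
      simp only [smul_smul, inv_mul_cancel₀ hc0, one_smul] at this
      rw [this, smul_neg, smul_smul, neg_smul]
    rw [h5]
    exact Submodule.smul_mem _ _ (Submodule.mem_span_singleton_self _)
  rw [hc, zero_smul, add_zero] at habc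
  have hb : b = 0 := by
    rcases smul_eq_zero.mp habc with h | h
    · exact h
    · exact absurd h hv
  exact ⟨ha, hb, hc⟩

lemma sim3_jordan_21 (M : Matrix (Fin 3) (Fin 3) F) (s : F)
    (h2 : (M - s • 1) ^ 2 = 0) (hne : M - s • 1 ≠ 0) :
    MatSimilar F M (jmat F 3 (fun _ => s) {0}) := by
  haveI : NeZero (3 : ℕ) := ⟨by norm_num⟩
  set C := M - s • 1 with hC
  have hM : M = C + s • 1 := by rw [hC]; abel
  obtain ⟨v, hv⟩ := exists_mulVec_ne hne
  have hC2 : ∀ x, C.mulVec (C.mulVec x) = 0 := by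
    intro x
    rw [Matrix.mulVec_mulVec, ← pow_two, h2, Matrix.zero_mulVec]
  obtain ⟨w, hw, hwns⟩ := exists_ker_vec M C h2 hv
  apply sim_of M _ ![v, C.mulVec v, w]
  · exact indep3 _ _ _ (indep_nilp2 C hv (hC2 v) hw hwns)
  · intro j
    fin_cases j
    · show M.mulVec v = _
      rw [Fin.sum_univ_three]
      norm_num [jmat]
      rw [mulVec_decomp M s v, ← hC]
    · show M.mulVec (C.mulVec v) = _
      rw [Fin.sum_univ_three]
      norm_num [jmat]
      calc (M * C).mulVec v = ((C : Matrix (Fin 3) (Fin 3) F) ^ 2 + s • C).mulVec v := by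
            nth_rewrite 1 [hM]
            rw [add_mul, Matrix.smul_mul, one_mul, pow_two]
        _ = s • C.mulVec v := by rw [h2, zero_add, Matrix.smul_mulVec]
    · show M.mulVec w = _
      rw [Fin.sum_univ_three]
      norm_num [jmat]
      rw [mulVec_decomp M s w, ← hC, hw, add_zero]
      rfl


lemma ker_inv {n : ℕ} (M N : Matrix (Fin n) (Fin n) F) (h : N * M = M * N) :
    ∀ v ∈ LinearMap.ker N.mulVecLin, M.mulVec v ∈ LinearMap.ker N.mulVecLin := by
  intro v hv
  rw [LinearMap.mem_ker, Matrix.mulVecLin_apply] at *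
  rw [Matrix.mulVec_mulVec, h, ← Matrix.mulVec_mulVec, hv, Matrix.mulVec_zero]


lemma chain_indep {n d : ℕ} (A : Matrix (Fin n) (Fin n) F) (w : Fin n → F)
    (h0 : (A ^ (d + 1)).mulVec w = 0) (hd : (A ^ d).mulVec w ≠ 0) :
    LinearIndependent F (fun i : Fin (d + 1) => (A ^ (i : ℕ)).mulVec w) := by
  classical
  have hkill : ∀ e, d + 1 ≤ e → (A ^ e).mulVec w = 0 := by
    intro e he
    have : A ^ e = A ^ (e - (d + 1)) * A ^ (d + 1) := by
      rw [← pow_add]; congr 1; omega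
    rw [this, ← Matrix.mulVec_mulVec, h0, Matrix.mulVec_zero]
  rw [Fintype.linearIndependent_iff]
  intro g hg
  suffices H : ∀ m : ℕ, ∀ i : Fin (d + 1), (i : ℕ) ≤ m → g i = 0 by
    intro i; exact H d i (Nat.lt_succ_iff.mp i.isLt)
  intro m
  induction m using Nat.strong_induction_on with
  | _ m IH =>
    intro i him
    rcases Nat.lt_or_ge (i : ℕ) m with h | h
    · exact IH (i : ℕ) h i le_rfl
    have him : (i : ℕ) = m := le_antisymm him h
    have hmd : m ≤ d := by omega
    -- apply A^(d-m) to hg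
    have key := congrArg (fun x => (A ^ (d - m)).mulVec x) hg
    simp only [Matrix.mulVec_zero] at key
    have hsum : (A ^ (d - m)).mulVec (∑ k : Fin (d+1), g k • (A ^ (k : ℕ)).mulVec w)
        = ∑ k : Fin (d+1), g k • (A ^ (d - m + (k : ℕ))).mulVec w := by
      rw [← Matrix.mulVecLin_apply, map_sum]
      refine Finset.sum_congr rfl fun k _ => ?_
      rw [LinearMap.map_smul, Matrix.mulVecLin_apply, Matrix.mulVec_mulVec, ← pow_add]
    rw [hsum] at key
    have hsingle : ∑ k : Fin (d+1), g k • (A ^ (d - m + (k : ℕ))).mulVec w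
        = g i • (A ^ d).mulVec w := by
      rw [Finset.sum_eq_single_of_mem i (Finset.mem_univ i)]
      · rw [him, show d - m + m = d by omega]
      · intro k _ hk
        rcases Nat.lt_or_ge (k : ℕ) m with hkm | hkm
        · rw [IH (k : ℕ) hkm k le_rfl, zero_smul]
        · have : m < (k : ℕ) := by
            rcases Nat.eq_or_lt_of_le hkm with h' | h'
            · exact absurd (Fin.ext (by omega) : k = i) hk
            · exact h'
          rw [hkill (d - m + (k : ℕ)) (by omega), smul_zero]
    rw [hsingle] at key
    rcases smul_eq_zero.mp key with h' | h'
    · exact h'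
    · exact absurd h' hd

lemma pow_inv_mem {n : ℕ} (A : Matrix (Fin n) (Fin n) F) (K : Submodule F (Fin n → F))
    (hinv : ∀ v ∈ K, A.mulVec v ∈ K) :
    ∀ (k : ℕ) (v), v ∈ K → (A ^ k).mulVec v ∈ K := by
  intro k
  induction k with
  | zero => intro v hv; simpa using hv
  | succ k ih =>
    intro v hv
    have : A ^ (k + 1) = A * A ^ k := by rw [pow_succ']
    rw [this, ← Matrix.mulVec_mulVec]
    exact hinv _ (ih v hv)

lemma pow_dim_kill {n p : ℕ} (A : Matrix (Fin n) (Fin n) F)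
    (K : Submodule F (Fin n → F))
    (hinv : ∀ v ∈ K, A.mulVec v ∈ K)
    (hnil : ∀ v ∈ K, (A ^ p).mulVec v = 0) :
    ∀ v ∈ K, (A ^ (Module.finrank F K)).mulVec v = 0 := by
  classical
  intro v hv
  by_contra hne
  obtain ⟨d, hd⟩ : ∃ d, Module.finrank F K = d := ⟨_, rfl⟩
  rw [hd] at hne
  have hex : ∃ k, (A ^ k).mulVec v = 0 := ⟨p, hnil v hv⟩
  set k0 := Nat.find hex with hk0def
  have hk0 : (A ^ k0).mulVec v = 0 := Nat.find_spec hex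
  have hmin : ∀ m, m < k0 → (A ^ m).mulVec v ≠ 0 := fun m hm => Nat.find_min hex hm
  -- monotone: if A^k v = 0 then A^(k+j) v = 0, so d < k0
  have hmono : ∀ j, (A ^ (k0 + j)).mulVec v = 0 := by
    intro j
    have : A ^ (k0 + j) = A ^ j * A ^ k0 := by rw [← pow_add]; ring_nf
    rw [this, ← Matrix.mulVec_mulVec, hk0, Matrix.mulVec_zero]
  have hdk : d + 1 ≤ k0 := by
    by_contra hc
    push_neg at hc
    have := hmono (d - k0)
    rw [show k0 + (d - k0) = d by omega] at this
    exact hne this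
  set w := (A ^ (k0 - (d + 1))).mulVec v with hw
  have hw1 : (A ^ (d + 1)).mulVec w = 0 := by
    rw [hw, Matrix.mulVec_mulVec, ← pow_add, show d + 1 + (k0 - (d+1)) = k0 by omega]
    exact hk0
  have hw2 : (A ^ d).mulVec w ≠ 0 := by
    rw [hw, Matrix.mulVec_mulVec, ← pow_add, show d + (k0 - (d+1)) = k0 - 1 by omega]
    exact hmin _ (by omega)
  have hindep := chain_indep A w hw1 hw2
  have hwK : w ∈ K := pow_inv_mem A K hinv _ v hv
  have hmem : ∀ i : Fin (d + 1), (A ^ (i : ℕ)).mulVec w ∈ K :=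
    fun i => pow_inv_mem A K hinv _ w hwK
  have hspan : Module.finrank F (Submodule.span F
      (Set.range fun i : Fin (d + 1) => (A ^ (i : ℕ)).mulVec w)) = d + 1 := by
    rw [finrank_span_eq_card hindep, Fintype.card_fin]
  have hle : Submodule.span F (Set.range fun i : Fin (d + 1) => (A ^ (i : ℕ)).mulVec w) ≤ K := by
    rw [Submodule.span_le]
    rintro x ⟨i, rfl⟩
    exact hmem i
  have := Submodule.finrank_mono hle
  rw [hspan, hd] at this
  omega



lemma compl_Kpm {n p : ℕ} (M : Matrix (Fin n) (Fin n) F) (hM : M ^ (2 * p) = 1)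
    (h2 : (2 : F) ≠ 0) :
    IsCompl (LinearMap.ker (M ^ p - 1).mulVecLin) (LinearMap.ker (M ^ p + 1).mulVecLin) := by
  have hsq : M ^ p * M ^ p = 1 := by rw [← pow_add, ← two_mul]; exact hM
  have key₁ : (M ^ p - 1) * (M ^ p + 1) = 0 := by
    have h : (M ^ p - 1) * (M ^ p + 1) = M ^ p * M ^ p + M ^ p - M ^ p - 1 := by noncomm_ring
    rw [h, hsq]; abel
  have key₂ : (M ^ p + 1) * (M ^ p - 1) = 0 := by
    have h : (M ^ p + 1) * (M ^ p - 1) = M ^ p * M ^ p + M ^ p - M ^ p - 1 := by noncomm_ring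
    rw [h, hsq]; abel
  constructor
  · rw [Submodule.disjoint_def]
    intro v hv1 hv2
    rw [LinearMap.mem_ker, Matrix.mulVecLin_apply, Matrix.sub_mulVec, Matrix.one_mulVec,
      sub_eq_zero] at hv1
    rw [LinearMap.mem_ker, Matrix.mulVecLin_apply, Matrix.add_mulVec, Matrix.one_mulVec,
      add_eq_zero_iff_eq_neg] at hv2
    have : (2 : F) • v = 0 := by
      rw [two_smul]
      nth_rewrite 1 [← hv1]
      rw [hv2]; abel
    rcases smul_eq_zero.mp this with h | h
    · exact absurd h h2
    · exact h
  · rw [codisjoint_iff, eq_top_iff']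
    intro v
    rw [Submodule.mem_sup]
    refine ⟨(2⁻¹ : F) • (M ^ p + 1).mulVec v, ?_, (-(2⁻¹ : F)) • (M ^ p - 1).mulVec v, ?_, ?_⟩
    · simp only [LinearMap.mem_ker, LinearMap.map_smul, Matrix.mulVecLin_apply,
        Matrix.mulVec_mulVec, key₁, Matrix.zero_mulVec, smul_zero]
    · simp only [LinearMap.mem_ker, LinearMap.map_smul, Matrix.mulVecLin_apply,
        Matrix.mulVec_mulVec, key₂, Matrix.zero_mulVec, smul_zero]
    · rw [neg_smul, ← sub_eq_add_neg, ← smul_sub]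
      have h : (M ^ p + 1).mulVec v - (M ^ p - 1).mulVec v = (2 : F) • v := by
        rw [Matrix.add_mulVec, Matrix.sub_mulVec, Matrix.one_mulVec, two_smul]
        abel
      rw [h, smul_smul, inv_mul_cancel₀ h2, one_smul]

lemma lemR {n : ℕ} (M : Matrix (Fin n) (Fin n) F)
    (Kp Km : Submodule F (Fin n → F)) (hc : IsCompl Kp Km)
    (hKm : ∀ u ∈ Km, M.mulVec u ∈ Km)
    (v : Fin n → F) (hv : v ∈ Kp) (hv0 : v ≠ 0)
    (hid : ∀ u ∈ Kp, M.mulVec u = u) : HasTrivialSummand F M := by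
  obtain ⟨C, hC⟩ := Submodule.exists_isCompl (Submodule.span F {(⟨v, hv⟩ : Kp)})
  set Cm := C.map Kp.subtype with hCm
  have hCmKp : Cm ≤ Kp := Submodule.map_subtype_le Kp C
  have hspan : (Submodule.span F {(⟨v, hv⟩ : Kp)}).map Kp.subtype = Submodule.span F {v} := by
    rw [Submodule.map_span]; simp
  refine ⟨v, hv0, hid v hv, Cm ⊔ Km, ⟨?_, ?_⟩, ?_⟩
  · rw [Submodule.disjoint_def]
    intro x hx hx2
    obtain ⟨y, hy, z, hz, hyz⟩ := Submodule.mem_sup.mp hx2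
    have hxKp : x ∈ Kp := Submodule.span_le.mpr (by simpa using hv) hx
    have hzKp : z ∈ Kp := by
      have : z = x - y := by rw [← hyz]; abel
      rw [this]
      exact Submodule.sub_mem _ hxKp (hCmKp hy)
    have hz0 : z = 0 := (Submodule.disjoint_def.mp hc.disjoint) z hzKp hz
    rw [hz0, add_zero] at hyz
    -- now x = y ∈ span{v} ⊓ Cm
    obtain ⟨y', hy', hyy'⟩ := hy
    obtain ⟨c, hcv⟩ := Submodule.mem_span_singleton.mp hx
    have hx' : (c • (⟨v, hv⟩ : Kp) : Kp) = y' := by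
      apply Subtype.ext
      show c • v = ↑y'
      rw [hcv, ← hyz, ← hyy']
      rfl
    have : y' ∈ Submodule.span F {(⟨v, hv⟩ : Kp)} :=
      hx' ▸ Submodule.smul_mem _ c (Submodule.mem_span_singleton_self _)
    have hy0 : y' = 0 := (Submodule.disjoint_def.mp hC.disjoint) y' this hy'
    rw [← hyz, ← hyy', hy0]
    simp
  · rw [codisjoint_iff]
    have h1 : Submodule.span F {v} ⊔ Cm = Kp := by
      rw [← hspan, hCm, ← Submodule.map_sup, hC.codisjoint.eq_top, Submodule.map_subtype_top]
    rw [← sup_assoc, h1, hc.codisjoint.eq_top]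
  · intro u hu
    obtain ⟨y, hy, z, hz, hyz⟩ := Submodule.mem_sup.mp hu
    rw [← hyz, Matrix.mulVec_add]
    apply Submodule.add_mem_sup
    · rw [hid y (hCmKp hy)]; exact hy
    · exact hKm z hz


lemma trivial_of_nilp2 (M : Matrix (Fin 3) (Fin 3) F)
    (h2 : (M - 1) ^ 2 = 0) (hne : M - 1 ≠ 0) : HasTrivialSummand F M := by
  obtain ⟨v, hv⟩ := exists_mulVec_ne hne
  have hC2 : ∀ x, (M - 1).mulVec ((M - 1).mulVec x) = 0 := by
    intro x; rw [Matrix.mulVec_mulVec, ← pow_two, h2, Matrix.zero_mulVec]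
  obtain ⟨w, hw, hwns⟩ := exists_ker_vec M (M - 1) h2 hv
  have hMw : M.mulVec w = w := by
    rw [Matrix.sub_mulVec, Matrix.one_mulVec, sub_eq_zero] at hw; exact hw
  have hMv : ∀ x, M.mulVec x = x + (M - 1).mulVec x := by
    intro x; rw [Matrix.sub_mulVec, Matrix.one_mulVec]; abel
  have hindep : LinearIndependent F ![w, v, (M - 1).mulVec v] := by
    apply indep3
    intro a b c habc
    have key := indep_nilp2 (M - 1) hv (hC2 v) hw hwns b c a (by rw [← habc]; abel)
    exact ⟨key.2.2, key.1, key.2.1⟩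
  refine ⟨w, ?_, hMw, Submodule.span F {v, (M - 1).mulVec v}, isCompl_triple _ _ _ hindep, ?_⟩
  · intro h
    apply hwns
    rw [h]
    exact Submodule.zero_mem _
  · intro x hx
    obtain ⟨c, d, hcd⟩ := Submodule.mem_span_pair.mp hx
    rw [← hcd, Matrix.mulVec_add, Matrix.mulVec_smul, Matrix.mulVec_smul, hMv v,
      hMv ((M - 1).mulVec v), hC2, add_zero]
    apply Submodule.mem_span_pair.mpr
    exact ⟨c, c + d, by module⟩

end Stmt6Aux

/-- in characteristic `p > 2`, a reduced representation of
`C_{2p}` with Cohen-Macaulay invariant ring is, in dimension 2, one of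
`V₂⁺`, `2V₁⁻`, `V₂⁻`, and in dimension 3, one of `V₂⁺ ⊕ V₁⁻`, `V₃⁺`,
`3V₁⁻`, `V₃⁻`, `V₂⁻ ⊕ V₁⁻`. -/
theorem stmt6 [IsAlgClosed F] (p : ℕ) (hp : Nat.Prime p) (hp2 : 2 < p) [CharP F p]
    (n : ℕ) (M : Matrix (Fin n) (Fin n) F) (hM : M ^ (2 * p) = 1)
    (hred : Reduced F M) (hCM : IsCM F (inva F (matAct F M))) :
    (n = 2 →
      MatSimilar F M (jmat F n (fun _ => 1) {0}) ∨              -- V₂⁺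
      MatSimilar F M (jmat F n (fun _ => -1) ∅) ∨               -- 2V₁⁻
      MatSimilar F M (jmat F n (fun _ => -1) {0})) ∧            -- V₂⁻
    (n = 3 →
      MatSimilar F M (jmat F n (fun i => if i < 2 then 1 else -1) {0}) ∨  -- V₂⁺ ⊕ V₁⁻
      MatSimilar F M (jmat F n (fun _ => 1) {0, 1}) ∨           -- V₃⁺
      MatSimilar F M (jmat F n (fun _ => -1) ∅) ∨               -- 3V₁⁻
      MatSimilar F M (jmat F n (fun _ => -1) {0, 1}) ∨          -- V₃⁻
      MatSimilar F M (jmat F n (fun _ => -1) {0})) := by        -- V₂⁻ ⊕ V₁⁻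
  clear hCM
  haveI : Fact (Nat.Prime p) := ⟨hp⟩
  have h2F : (2 : F) ≠ 0 := by
    intro h
    have hd : (p : ℕ) ∣ 2 := (CharP.cast_eq_zero_iff F p 2).mp (by exact_mod_cast h)
    have := Nat.le_of_dvd (by norm_num) hd
    omega
  constructor
  · -- dimension 2
    intro hn; subst hn
    haveI : NeZero (2 : ℕ) := ⟨by norm_num⟩
    have hA : (M - 1) ^ p = M ^ p - 1 := by
      simpa using sub_pow_char_of_commute p (Commute.one_right M)
    have hB : (M + 1) ^ p = M ^ p + 1 := by
      simpa using add_pow_char_of_commute p (Commute.one_right M)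
    have hcompl := Stmt6Aux.compl_Kpm M hM h2F
    set Kp := LinearMap.ker (M ^ p - 1).mulVecLin with hKpdef
    set Km := LinearMap.ker (M ^ p + 1).mulVecLin with hKmdef
    have hcomm1 : (M ^ p - 1) * M = M * (M ^ p - 1) := by
      rw [sub_mul, mul_sub, one_mul, mul_one, pow_mul_comm']
    have hcomm2 : (M ^ p + 1) * M = M * (M ^ p + 1) := by
      rw [add_mul, mul_add, one_mul, mul_one, pow_mul_comm']
    have hMKp : ∀ u ∈ Kp, M.mulVec u ∈ Kp := Stmt6Aux.ker_inv M _ hcomm1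
    have hMKm : ∀ u ∈ Km, M.mulVec u ∈ Km := Stmt6Aux.ker_inv M _ hcomm2
    have hAKp : ∀ v ∈ Kp, (M - 1).mulVec v ∈ Kp := by
      intro v hv
      rw [Matrix.sub_mulVec, Matrix.one_mulVec]
      exact Submodule.sub_mem _ (hMKp v hv) hv
    have hBKm : ∀ v ∈ Km, (M + 1).mulVec v ∈ Km := by
      intro v hv
      rw [Matrix.add_mulVec, Matrix.one_mulVec]
      exact Submodule.add_mem _ (hMKm v hv) hv
    have hnilA : ∀ v ∈ Kp, ((M - 1) ^ p).mulVec v = 0 := by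
      intro v hv
      rw [hA, ← Matrix.mulVecLin_apply]
      exact LinearMap.mem_ker.mp hv
    have hnilB : ∀ v ∈ Km, ((M + 1) ^ p).mulVec v = 0 := by
      intro v hv
      rw [hB, ← Matrix.mulVecLin_apply]
      exact LinearMap.mem_ker.mp hv
    have hkillA := Stmt6Aux.pow_dim_kill (M - 1) Kp hAKp hnilA
    have hkillB := Stmt6Aux.pow_dim_kill (M + 1) Km hBKm hnilB
    have hfr2 : Module.finrank F (Fin 2 → F) = 2 := by simp
    have hfr : Module.finrank F Kp + Module.finrank F Km = 2 := by
      rw [Submodule.finrank_add_eq_of_isCompl hcompl, hfr2]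
    obtain ⟨a, ha⟩ : ∃ a, Module.finrank F Kp = a := ⟨_, rfl⟩
    rw [ha] at hkillA hfr
    have haKm : Module.finrank F Km = 2 - a := by omega
    rw [haKm] at hkillB
    have ha2 : a ≤ 2 := by omega
    interval_cases a
    · -- Kp = ⊥, Km = ⊤ : minus part only
      have hKmtop : Km = ⊤ := by
        apply Submodule.eq_top_of_finrank_eq
        rw [haKm, hfr2]
      norm_num [-Matrix.mulVec_fin_two] at hkillB
      have hB2 : (M + 1) ^ 2 = 0 := by
        apply Stmt6Aux.mat_eq_zero_of_mulVec
        intro v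
        exact hkillB v (by rw [hKmtop]; trivial)
      have hCm : M - (-1 : F) • 1 = M + 1 := by
        rw [neg_smul, one_smul, sub_neg_eq_add]
      by_cases hB0 : M + 1 = 0
      · right; left
        have hMneg : M = -1 := by rwa [add_eq_zero_iff_eq_neg] at hB0
        refine ⟨1, ?_⟩
        simp only [Units.val_one, one_mul, inv_one]
        rw [hMneg]
        ext i j
        fin_cases i <;> fin_cases j <;>
          simp [jmat, Matrix.neg_apply, Matrix.one_apply]
      · right; right
        exact Stmt6Aux.sim2_jordan M (-1) (by rw [hCm]; exact hB2) (by rw [hCm]; exact hB0)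
    · -- a = 1 : impossible by reducedness
      have hKpne : Kp ≠ ⊥ := by
        intro h
        rw [h] at ha
        simp at ha
      obtain ⟨v, hv, hv0⟩ := Submodule.exists_mem_ne_zero_of_ne_bot hKpne
      have hid : ∀ u ∈ Kp, M.mulVec u = u := by
        intro u hu
        have := hkillA u hu
        rwa [pow_one, Matrix.sub_mulVec, Matrix.one_mulVec, sub_eq_zero] at this
      exact absurd (Stmt6Aux.lemR M Kp Km hcompl hMKm v hv hv0 hid) hred
    · -- a = 2 : Kp = ⊤, plus part only
      have hKptop : Kp = ⊤ := by
        apply Submodule.eq_top_of_finrank_eq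
        rw [ha, hfr2]
      have hA2 : (M - 1) ^ 2 = 0 := by
        apply Stmt6Aux.mat_eq_zero_of_mulVec
        intro v
        exact hkillA v (by rw [hKptop]; trivial)
      by_cases hA0 : M - 1 = 0
      · -- M = 1 : trivial summand, contradiction
        have hM1 : M = 1 := by rwa [sub_eq_zero] at hA0
        have hid : ∀ u ∈ Kp, M.mulVec u = u := by
          intro u _
          rw [hM1, Matrix.one_mulVec]
        have hv : (Pi.single 0 1 : Fin 2 → F) ∈ Kp := by rw [hKptop]; trivial
        have hv0 : (Pi.single 0 1 : Fin 2 → F) ≠ 0 := by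
          intro h
          have := congrFun h 0
          simp at this
        exact absurd (Stmt6Aux.lemR M Kp Km hcompl hMKm _ hv hv0 hid) hred
      · left
        have h1 : M - (1 : F) • 1 = M - 1 := by rw [one_smul]
        exact Stmt6Aux.sim2_jordan M 1 (by rw [h1]; exact hA2) (by rw [h1]; exact hA0)
  · -- dimension 3
    intro hn; subst hn
    haveI : NeZero (3 : ℕ) := ⟨by norm_num⟩
    have hA : (M - 1) ^ p = M ^ p - 1 := by
      simpa using sub_pow_char_of_commute p (Commute.one_right M)
    have hB : (M + 1) ^ p = M ^ p + 1 := by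
      simpa using add_pow_char_of_commute p (Commute.one_right M)
    have hcompl := Stmt6Aux.compl_Kpm M hM h2F
    set Kp := LinearMap.ker (M ^ p - 1).mulVecLin with hKpdef
    set Km := LinearMap.ker (M ^ p + 1).mulVecLin with hKmdef
    have hcomm1 : (M ^ p - 1) * M = M * (M ^ p - 1) := by
      rw [sub_mul, mul_sub, one_mul, mul_one, pow_mul_comm']
    have hcomm2 : (M ^ p + 1) * M = M * (M ^ p + 1) := by
      rw [add_mul, mul_add, one_mul, mul_one, pow_mul_comm']
    have hMKp : ∀ u ∈ Kp, M.mulVec u ∈ Kp := Stmt6Aux.ker_inv M _ hcomm1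
    have hMKm : ∀ u ∈ Km, M.mulVec u ∈ Km := Stmt6Aux.ker_inv M _ hcomm2
    have hAKp : ∀ v ∈ Kp, (M - 1).mulVec v ∈ Kp := by
      intro v hv
      rw [Matrix.sub_mulVec, Matrix.one_mulVec]
      exact Submodule.sub_mem _ (hMKp v hv) hv
    have hBKm : ∀ v ∈ Km, (M + 1).mulVec v ∈ Km := by
      intro v hv
      rw [Matrix.add_mulVec, Matrix.one_mulVec]
      exact Submodule.add_mem _ (hMKm v hv) hv
    have hnilA : ∀ v ∈ Kp, ((M - 1) ^ p).mulVec v = 0 := by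
      intro v hv
      rw [hA, ← Matrix.mulVecLin_apply]
      exact LinearMap.mem_ker.mp hv
    have hnilB : ∀ v ∈ Km, ((M + 1) ^ p).mulVec v = 0 := by
      intro v hv
      rw [hB, ← Matrix.mulVecLin_apply]
      exact LinearMap.mem_ker.mp hv
    have hkillA := Stmt6Aux.pow_dim_kill (M - 1) Kp hAKp hnilA
    have hkillB := Stmt6Aux.pow_dim_kill (M + 1) Km hBKm hnilB
    have hfr3 : Module.finrank F (Fin 3 → F) = 3 := by simp
    have hfr : Module.finrank F Kp + Module.finrank F Km = 3 := by
      rw [Submodule.finrank_add_eq_of_isCompl hcompl, hfr3]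
    obtain ⟨a, ha⟩ : ∃ a, Module.finrank F Kp = a := ⟨_, rfl⟩
    rw [ha] at hkillA hfr
    have haKm : Module.finrank F Km = 3 - a := by omega
    rw [haKm] at hkillB
    have ha3 : a ≤ 3 := by omega
    interval_cases a
    · -- a = 0 : Km = ⊤, minus part only
      have hKmtop : Km = ⊤ := by
        apply Submodule.eq_top_of_finrank_eq
        rw [haKm, hfr3]
      norm_num at hkillB
      have hB3 : (M + 1) ^ 3 = 0 := by
        apply Stmt6Aux.mat_eq_zero_of_mulVec
        intro v
        exact hkillB v (by rw [hKmtop]; trivial)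
      have hCm : M - (-1 : F) • 1 = M + 1 := by
        rw [neg_smul, one_smul, sub_neg_eq_add]
      by_cases hB0 : M + 1 = 0
      · right; right; left
        have hMneg : M = -1 := by rwa [add_eq_zero_iff_eq_neg] at hB0
        refine ⟨1, ?_⟩
        simp only [Units.val_one, one_mul, inv_one]
        rw [hMneg]
        ext i j
        fin_cases i <;> fin_cases j <;>
          simp [jmat, Matrix.neg_apply, Matrix.one_apply]
      · by_cases hB2 : (M + 1) ^ 2 = 0
        · right; right; right; right
          exact Stmt6Aux.sim3_jordan_21 M (-1) (by rw [hCm]; exact hB2) (by rw [hCm]; exact hB0)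
        · right; right; right; left
          exact Stmt6Aux.sim3_jordan_full M (-1) (by rw [hCm]; exact hB3) (by rw [hCm]; exact hB2)
    · -- a = 1 : impossible by reducedness
      have hKpne : Kp ≠ ⊥ := by
        intro h
        rw [h] at ha
        simp at ha
      obtain ⟨v, hv, hv0⟩ := Submodule.exists_mem_ne_zero_of_ne_bot hKpne
      have hid : ∀ u ∈ Kp, M.mulVec u = u := by
        intro u hu
        have := hkillA u hu
        rwa [pow_one, Matrix.sub_mulVec, Matrix.one_mulVec, sub_eq_zero] at this
      exact absurd (Stmt6Aux.lemR M Kp Km hcompl hMKm v hv hv0 hid) hred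
    · -- a = 2 : mixed case V₂⁺ ⊕ V₁⁻ (or contradiction)
      norm_num at hkillB
      have hMu : ∀ u ∈ Km, M.mulVec u = -u := by
        intro u hu
        have := hkillB u hu
        rwa [Matrix.add_mulVec, Matrix.one_mulVec, add_eq_zero_iff_eq_neg] at this
      by_cases hA0 : ∀ u ∈ Kp, (M - 1).mulVec u = 0
      · have hid : ∀ u ∈ Kp, M.mulVec u = u := by
          intro u hu
          have := hA0 u hu
          rwa [Matrix.sub_mulVec, Matrix.one_mulVec, sub_eq_zero] at this
        have hKpne : Kp ≠ ⊥ := by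
          intro h
          rw [h] at ha
          simp at ha
        obtain ⟨v, hv, hv0⟩ := Submodule.exists_mem_ne_zero_of_ne_bot hKpne
        exact absurd (Stmt6Aux.lemR M Kp Km hcompl hMKm v hv hv0 hid) hred
      · push_neg at hA0
        obtain ⟨v, hv, hAv⟩ := hA0
        have hKmne : Km ≠ ⊥ := by
          intro h
          rw [h] at haKm
          simp at haKm
        obtain ⟨u, hu, hu0⟩ := Submodule.exists_mem_ne_zero_of_ne_bot hKmne
        have hA2v : (M - 1).mulVec ((M - 1).mulVec v) = 0 := by
          rw [Matrix.mulVec_mulVec, ← pow_two]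
          exact hkillA v hv
        left
        apply Stmt6Aux.sim_of M _ ![v, (M - 1).mulVec v, u]
        · apply Stmt6Aux.indep3
          intro a' b' c' habc
          have hmem1 : a' • v + b' • (M - 1).mulVec v ∈ Kp :=
            Submodule.add_mem _ (Submodule.smul_mem _ _ hv)
              (Submodule.smul_mem _ _ (hAKp v hv))
          have hmem2 : c' • u ∈ Km := Submodule.smul_mem _ _ hu
          have heq : c' • u = -(a' • v + b' • (M - 1).mulVec v) :=
            eq_neg_of_add_eq_zero_right habc
          have hcu : c' • u = 0 := by
            have h3 : c' • u ∈ Kp := by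
              rw [heq]
              exact Submodule.neg_mem _ hmem1
            exact Submodule.disjoint_def.mp hcompl.disjoint _ h3 hmem2
          have hc' : c' = 0 := by
            rcases smul_eq_zero.mp hcu with h | h
            · exact h
            · exact absurd h hu0
          rw [hc', zero_smul, add_zero] at habc
          have h4 := congrArg (M - 1).mulVec habc
          rw [Matrix.mulVec_add, Matrix.mulVec_smul, Matrix.mulVec_smul, hA2v, smul_zero,
            add_zero, Matrix.mulVec_zero] at h4
          have ha' : a' = 0 := by
            rcases smul_eq_zero.mp h4 with h | h
            · exact h
            · exact absurd h hAv
          rw [ha', zero_smul, zero_add] at habc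
          have hb' : b' = 0 := by
            rcases smul_eq_zero.mp habc with h | h
            · exact h
            · exact absurd h hAv
          exact ⟨ha', hb', hc'⟩
        · intro j
          fin_cases j
          · show M.mulVec v = _
            rw [Fin.sum_univ_three]
            norm_num [jmat]
            rw [Matrix.sub_mulVec, Matrix.one_mulVec]
            abel
          · show M.mulVec ((M - 1).mulVec v) = _
            rw [Fin.sum_univ_three]
            norm_num [jmat]
            have hsplit : M * (M - 1) = (M - 1) ^ 2 + (M - 1) := by noncomm_ring
            rw [hsplit, Matrix.add_mulVec, hkillA v hv, zero_add]
          · show M.mulVec u = _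
            rw [Fin.sum_univ_three]
            norm_num [jmat]
            rw [hMu u hu]
            rfl
    · -- a = 3 : Kp = ⊤, plus part only
      have hKptop : Kp = ⊤ := by
        apply Submodule.eq_top_of_finrank_eq
        rw [ha, hfr3]
      have hA3 : (M - 1) ^ 3 = 0 := by
        apply Stmt6Aux.mat_eq_zero_of_mulVec
        intro v
        exact hkillA v (by rw [hKptop]; trivial)
      by_cases hA0 : M - 1 = 0
      · have hM1 : M = 1 := by rwa [sub_eq_zero] at hA0
        have hid : ∀ u ∈ Kp, M.mulVec u = u := by
          intro u _
          rw [hM1, Matrix.one_mulVec]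
        have hv : (Pi.single 0 1 : Fin 3 → F) ∈ Kp := by rw [hKptop]; trivial
        have hv0 : (Pi.single 0 1 : Fin 3 → F) ≠ 0 := by
          intro h
          have := congrFun h 0
          simp at this
        exact absurd (Stmt6Aux.lemR M Kp Km hcompl hMKm _ hv hv0 hid) hred
      · by_cases hA2 : (M - 1) ^ 2 = 0
        · exact absurd (Stmt6Aux.trivial_of_nilp2 M hA2 hA0) hred
        · right; left
          have h1 : M - (1 : F) • 1 = M - 1 := by rw [one_smul]
          exact Stmt6Aux.sim3_jordan_full M 1 (by rw [h1]; exact hA3) (by rw [h1]; exact hA2)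

end
end

section
/- Let p > 2 be a prime, F an algebraically closed field of characteristic p, and 4 ≤ k ≤ p. Let R = F[V_k^+]^{C_{2p}} = F[x_1,...,x_k]^{⟨T_k^+⟩} and set ℓ_1 = x_1, ℓ_2 = x_2^2 − x_1(x_2 + 2x_3), ℓ_3 = x_2^3 + x_1^2(3x_4 − x_2) − 3x_1x_2x_3, and N = x_2^p − x_1^{p−1}x_2, all of which lie in R. Then ℓ_3·N − ℓ_2^{(p+3)/2} lies in the ideal (ℓ_1)R, hence ℓ_3·N ∈ (ℓ_1, ℓ_2)R, but ℓ_3 ∉ (ℓ_1, ℓ_2)R; consequently ℓ_1, ℓ_2, N (which are algebraically independent over F) do not form a regular sequence in R. -/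
open MvPolynomial

set_option synthInstance.maxHeartbeats 1000000
set_option maxHeartbeats 1000000

noncomputable section

variable (F : Type) [Field F]

/-- The action of `T_k⁺` (Jordan block, diagonal `1`) on `F[x₁,…,x_k]`. -/
def sigPlusK (k : ℕ) : MvPolynomial (Fin k) F →ₐ[F] MvPolynomial (Fin k) F :=
  aeval fun i =>
    (if i.1 = 0 then 0 else
      X ⟨i.1 - 1, lt_of_le_of_lt (Nat.sub_le _ _) i.isLt⟩) + X i

/-- `ℓ₁ = x₁`. -/
def ell1 (k : ℕ) (h : 4 ≤ k) : MvPolynomial (Fin k) F := X ⟨0, by omega⟩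

/-- `ℓ₂ = x₂² - x₁(x₂ + 2x₃)`. -/
def ell2 (k : ℕ) (h : 4 ≤ k) : MvPolynomial (Fin k) F :=
  X ⟨1, by omega⟩ ^ 2 - X ⟨0, by omega⟩ * (X ⟨1, by omega⟩ + 2 * X ⟨2, by omega⟩)

/-- `ℓ₃ = x₂³ + x₁²(3x₄ - x₂) - 3x₁x₂x₃`. -/
def ell3 (k : ℕ) (h : 4 ≤ k) : MvPolynomial (Fin k) F :=
  X ⟨1, by omega⟩ ^ 3 +
    X ⟨0, by omega⟩ ^ 2 * (3 * X ⟨3, by omega⟩ - X ⟨1, by omega⟩) -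
    3 * X ⟨0, by omega⟩ * X ⟨1, by omega⟩ * X ⟨2, by omega⟩

/-- `N = N(x₂) = x₂^p - x₁^{p-1} x₂`. -/
def nrm (p k : ℕ) (h : 4 ≤ k) : MvPolynomial (Fin k) F :=
  X ⟨1, by omega⟩ ^ p - X ⟨0, by omega⟩ ^ (p - 1) * X ⟨1, by omega⟩


section AuxLemmas

variable {F}

lemma sigX {k : ℕ} (j : Fin k) :
    sigPlusK F k (X j) =
      (if j.1 = 0 then 0 else
        X ⟨j.1 - 1, lt_of_le_of_lt (Nat.sub_le _ _) j.isLt⟩) + X j := by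
  rw [sigPlusK, aeval_X]

lemma sig0 {k : ℕ} (h : 4 ≤ k) :
    sigPlusK F k (X ⟨0, by omega⟩) = X (⟨0, by omega⟩ : Fin k) := by
  rw [sigX]; simp

lemma sig1 {k : ℕ} (h : 4 ≤ k) :
    sigPlusK F k (X ⟨1, by omega⟩) =
      X (⟨0, by omega⟩ : Fin k) + X ⟨1, by omega⟩ := by
  rw [sigX]; simp

lemma sig2 {k : ℕ} (h : 4 ≤ k) :
    sigPlusK F k (X ⟨2, by omega⟩) =
      X (⟨1, by omega⟩ : Fin k) + X ⟨2, by omega⟩ := by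
  rw [sigX]; simp

lemma sig3 {k : ℕ} (h : 4 ≤ k) :
    sigPlusK F k (X ⟨3, by omega⟩) =
      X (⟨2, by omega⟩ : Fin k) + X ⟨3, by omega⟩ := by
  rw [sigX]; simp

lemma mem_inva {k : ℕ} {σ : MvPolynomial (Fin k) F →ₐ[F] MvPolynomial (Fin k) F}
    {x : MvPolynomial (Fin k) F} (h : σ x = x) : x ∈ inva F σ := by
  rw [inva, AlgHom.mem_equalizer, AlgHom.id_apply]; exact h

lemma inva_spec {k : ℕ} {σ : MvPolynomial (Fin k) F →ₐ[F] MvPolynomial (Fin k) F}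
    {x : MvPolynomial (Fin k) F} (h : x ∈ inva F σ) : σ x = x := by
  rw [inva, AlgHom.mem_equalizer, AlgHom.id_apply] at h; exact h

lemma sig_ell1 {k : ℕ} (h : 4 ≤ k) : sigPlusK F k (ell1 F k h) = ell1 F k h := by
  rw [ell1, sig0 h]

lemma sig_ell2 {k : ℕ} (h : 4 ≤ k) : sigPlusK F k (ell2 F k h) = ell2 F k h := by
  rw [ell2]
  simp only [map_sub, map_add, map_mul, map_pow, map_ofNat, sig0 h, sig1 h, sig2 h]
  ring

lemma sig_ell3 {k : ℕ} (h : 4 ≤ k) : sigPlusK F k (ell3 F k h) = ell3 F k h := by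
  rw [ell3]
  simp only [map_sub, map_add, map_mul, map_pow, map_ofNat,
    sig0 h, sig1 h, sig2 h, sig3 h]
  ring

lemma sig_nrm {k p : ℕ} (h : 4 ≤ k) (hp : Nat.Prime p) [CharP F p] :
    sigPlusK F k (nrm F p k h) = nrm F p k h := by
  haveI := Fact.mk hp
  obtain ⟨q, rfl⟩ : ∃ q, p = q + 1 := ⟨p - 1, by have := hp.two_le; omega⟩
  rw [nrm]
  simp only [map_sub, map_mul, map_pow, sig0 h, sig1 h, Nat.add_sub_cancel]
  rw [add_pow_char]
  ring

lemma X0_dvd_sub_eps {k : ℕ} (hk : 0 < k) (f : MvPolynomial (Fin k) F) :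
    (X ⟨0, hk⟩ : MvPolynomial (Fin k) F) ∣
      f - aeval (fun i : Fin k => if i.1 = 0 then 0 else X i) f := by
  induction f using MvPolynomial.induction_on with
  | C a => simp
  | add f g hf hg =>
      have h' : (f + g) - aeval (fun i : Fin k => if i.1 = 0 then 0 else X i) (f + g)
          = (f - aeval (fun i : Fin k => if i.1 = 0 then 0 else X i) f)
            + (g - aeval (fun i : Fin k => if i.1 = 0 then 0 else X i) g) := by
        rw [map_add]; ring
      rw [h']; exact dvd_add hf hg
  | mul_X f i hf =>
      rcases eq_or_ne i.1 0 with h | h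
      · have hi : i = ⟨0, hk⟩ := Fin.ext h
        rw [map_mul, aeval_X, if_pos h, mul_zero, sub_zero, hi]
        exact dvd_mul_left _ _
      · rw [map_mul, aeval_X, if_neg h]
        have h' : f * X i - aeval (fun i : Fin k => if i.1 = 0 then 0 else X i) f * X i
            = (f - aeval (fun i : Fin k => if i.1 = 0 then 0 else X i) f) * X i := by ring
        rw [h']
        exact hf.mul_right _

lemma algIndAux {k p : ℕ} (hk4 : 4 ≤ k) (hp : Nat.Prime p) (hp2 : 2 < p) [CharP F p] :
    AlgebraicIndependent F ![ell1 F k hk4, ell2 F k hk4, nrm F p k hk4] := by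
  classical
  let K := FractionRing (MvPolynomial (Fin 3) F)
  let Om := AlgebraicClosure K
  let iota : MvPolynomial (Fin 3) F →ₐ[F] Om := IsScalarTower.toAlgHom F _ _
  have hiota : Function.Injective iota := by
    have hco : ⇑iota = ⇑((algebraMap K Om).comp (algebraMap (MvPolynomial (Fin 3) F) K)) := by
      rw [IsScalarTower.coe_toAlgHom',
        IsScalarTower.algebraMap_eq (MvPolynomial (Fin 3) F) K Om]
    rw [hco, RingHom.coe_comp]
    exact (RingHom.injective _).comp (IsFractionRing.injective _ _)
  set y : Fin 3 → Om := fun i => iota (X i) with hy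
  have hy0 : y 0 ≠ 0 := by
    intro h
    have hz : (X 0 : MvPolynomial (Fin 3) F) = 0 := hiota (by rw [map_zero]; exact h)
    exact MvPolynomial.X_ne_zero _ hz
  have h2F : (2 : F) ≠ 0 := by
    have : ((2 : ℕ) : F) ≠ 0 := by
      rw [Ne, CharP.cast_eq_zero_iff F p]
      intro hdvd
      exact absurd (Nat.le_of_dvd two_pos hdvd) (by omega)
    simpa using this
  have h2 : (2 : Om) ≠ 0 := by
    have : (2 : Om) = algebraMap F Om 2 := by
      rw [map_ofNat]
    rw [this]
    exact fun hc => h2F ((algebraMap F Om).injective (by simpa using hc))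
  -- a root t of Z^p - y0^(p-1) Z - y2
  have hdeg : (Polynomial.X ^ p -
      (Polynomial.C (y 0 ^ (p - 1)) * Polynomial.X + Polynomial.C (y 2)) :
        Polynomial Om).degree ≠ 0 := by
    rw [Polynomial.degree_sub_eq_left_of_degree_lt]
    · rw [Polynomial.degree_X_pow]; exact_mod_cast (by omega : p ≠ 0)
    · rw [Polynomial.degree_X_pow]
      calc (Polynomial.C (y 0 ^ (p - 1)) * Polynomial.X + Polynomial.C (y 2) :
            Polynomial Om).degree ≤ 1 := Polynomial.degree_linear_le
        _ < (p : WithBot ℕ) := by exact_mod_cast (by omega : 1 < p)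
  obtain ⟨t, ht⟩ := IsAlgClosed.exists_root _ hdeg
  have ht' : t ^ p - y 0 ^ (p - 1) * t = y 2 := by
    have h' := ht
    simp only [Polynomial.IsRoot, Polynomial.eval_sub, Polynomial.eval_add,
      Polynomial.eval_mul, Polynomial.eval_pow, Polynomial.eval_C,
      Polynomial.eval_X] at h'
    linear_combination h'
  set u : Fin k → Om := fun i =>
    if i.1 = 0 then y 0 else if i.1 = 1 then t
      else if i.1 = 2 then (t ^ 2 - y 0 * t - y 1) / (2 * y 0) else 0 with hu
  have hu0 : u ⟨0, by omega⟩ = y 0 := by simp [hu]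
  have hu1 : u ⟨1, by omega⟩ = t := by simp [hu]
  have hu2 : u ⟨2, by omega⟩ = (t ^ 2 - y 0 * t - y 1) / (2 * y 0) := by simp [hu]
  have e1 : aeval u (ell1 F k hk4) = y 0 := by rw [ell1, aeval_X, hu0]
  have e2 : aeval u (ell2 F k hk4) = y 1 := by
    rw [ell2]
    simp only [map_sub, map_add, map_mul, map_pow, map_ofNat, aeval_X, hu0, hu1, hu2]
    have key : (t ^ 2 - y 0 * t - y 1) / (2 * y 0) * (2 * y 0) = t ^ 2 - y 0 * t - y 1 :=
      div_mul_cancel₀ _ (mul_ne_zero h2 hy0)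
    linear_combination (-1 : Om) * key
  have e3 : aeval u (nrm F p k hk4) = y 2 := by
    rw [nrm]
    simp only [map_sub, map_mul, map_pow, aeval_X, hu0, hu1]
    exact ht'
  apply AlgebraicIndependent.of_comp (aeval u : MvPolynomial (Fin k) F →ₐ[F] Om)
  have hfam : ⇑(aeval u : MvPolynomial (Fin k) F →ₐ[F] Om) ∘
      ![ell1 F k hk4, ell2 F k hk4, nrm F p k hk4] = ⇑iota ∘ X := by
    funext i
    fin_cases i
    · simpa using e1
    · simpa using e2
    · simpa using e3
  rw [hfam]
  exact (AlgHom.algebraicIndependent_iff iota hiota).2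
    (MvPolynomial.algebraicIndependent_X (Fin 3) F)

lemma notRegAux {R : Type} [CommRing R] {a b c l : R}
    (hB : l * c ∈ Ideal.span {a, b}) (hC : l ∉ Ideal.span {a, b}) :
    ¬ RingTheory.Sequence.IsRegular R [a, b, c] := by
  intro hreg
  have hw2 := hreg.toIsWeaklyRegular.regular_mod_prev 2 (by norm_num)
  have hofl : Ideal.ofList ([a, b, c].take 2) = Ideal.span {a, b} := by
    show Ideal.ofList [a, b] = _
    rw [Ideal.ofList_cons, Ideal.ofList_cons, Ideal.ofList_nil, Ideal.span_insert,
      sup_bot_eq]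
  rw [hofl] at hw2
  have hw2' : IsSMulRegular (R ⧸ (Ideal.span {a, b} • ⊤ : Submodule R R)) c := hw2
  have hIT : (Ideal.span {a, b} • ⊤ : Submodule R R) = Ideal.span {a, b} := by
    rw [Ideal.smul_eq_mul, Ideal.mul_top]
  have hq : (Submodule.Quotient.mk l :
      R ⧸ (Ideal.span {a, b} • ⊤ : Submodule R R)) = 0 := by
    apply hw2'
    show c • (Submodule.Quotient.mk l :
      R ⧸ (Ideal.span {a, b} • ⊤ : Submodule R R)) = c • 0
    rw [smul_zero, ← Submodule.Quotient.mk_smul]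
    apply (Submodule.Quotient.mk_eq_zero _).mpr
    rw [hIT]
    have hcl : c • l = l * c := by rw [smul_eq_mul, mul_comm]
    rw [hcl]
    exact hB
  have hmem := (Submodule.Quotient.mk_eq_zero _).mp hq
  rw [hIT] at hmem
  exact hC hmem

lemma keyDvd {k p : ℕ} (hk4 : 4 ≤ k) (hp : Nat.Prime p) (hp2 : 2 < p) [CharP F p] :
    ∃ g : MvPolynomial (Fin k) F, g ∈ inva F (sigPlusK F k) ∧
      ell3 F k hk4 * nrm F p k hk4 - ell2 F k hk4 ^ ((p + 3) / 2) =
        ell1 F k hk4 * g := by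
  obtain ⟨r, rfl⟩ : ∃ r, p = 2 * r + 3 := by
    obtain ⟨c, hc⟩ := hp.odd_of_ne_two (by omega)
    exact ⟨c - 1, by omega⟩
  rw [show (2 * r + 3 + 3) / 2 = r + 3 from by omega]
  have hx0 : (X (⟨0, by omega⟩ : Fin k) : MvPolynomial (Fin k) F) ≠ 0 := X_ne_zero _
  have hnrm : nrm F (2 * r + 3) k hk4 =
      X (⟨1, by omega⟩ : Fin k) ^ (2 * r + 3) -
        X (⟨0, by omega⟩ : Fin k) ^ (2 * r + 2) * X ⟨1, by omega⟩ := by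
    rw [nrm, show 2 * r + 3 - 1 = 2 * r + 2 from by omega]
  have d1 : (X (⟨0, by omega⟩ : Fin k) : MvPolynomial (Fin k) F) ∣
      ell2 F k hk4 - X ⟨1, by omega⟩ ^ 2 :=
    ⟨-(X ⟨1, by omega⟩ + 2 * X ⟨2, by omega⟩), by rw [ell2]; ring⟩
  have d2 : (X (⟨0, by omega⟩ : Fin k) : MvPolynomial (Fin k) F) ∣
      ell2 F k hk4 ^ (r + 3) - (X ⟨1, by omega⟩ ^ 2) ^ (r + 3) :=
    d1.trans (sub_dvd_pow_sub_pow _ _ _)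
  have d3 : (X (⟨0, by omega⟩ : Fin k) : MvPolynomial (Fin k) F) ∣
      ell3 F k hk4 * nrm F (2 * r + 3) k hk4 - X ⟨1, by omega⟩ ^ (2 * r + 6) := by
    refine ⟨X ⟨1, by omega⟩ ^ 3 * (-(X ⟨0, by omega⟩ ^ (2 * r + 1) * X ⟨1, by omega⟩)) +
      (X ⟨0, by omega⟩ * (3 * X ⟨3, by omega⟩ - X ⟨1, by omega⟩) -
        3 * X ⟨1, by omega⟩ * X ⟨2, by omega⟩) * X ⟨1, by omega⟩ ^ (2 * r + 3) +
      X ⟨0, by omega⟩ *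
        ((X ⟨0, by omega⟩ * (3 * X ⟨3, by omega⟩ - X ⟨1, by omega⟩) -
          3 * X ⟨1, by omega⟩ * X ⟨2, by omega⟩) *
          (-(X ⟨0, by omega⟩ ^ (2 * r + 1) * X ⟨1, by omega⟩))), ?_⟩
    rw [ell3, hnrm]
    ring
  have key : (X (⟨0, by omega⟩ : Fin k) : MvPolynomial (Fin k) F) ∣
      ell3 F k hk4 * nrm F (2 * r + 3) k hk4 - ell2 F k hk4 ^ (r + 3) := by
    have hsplit : ell3 F k hk4 * nrm F (2 * r + 3) k hk4 - ell2 F k hk4 ^ (r + 3) =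
        (ell3 F k hk4 * nrm F (2 * r + 3) k hk4 - X ⟨1, by omega⟩ ^ (2 * r + 6)) -
          (ell2 F k hk4 ^ (r + 3) - (X ⟨1, by omega⟩ ^ 2) ^ (r + 3)) := by
      ring
    rw [hsplit]
    exact dvd_sub d3 d2
  obtain ⟨g, hg⟩ := key
  refine ⟨g, ?_, by rw [ell1]; exact hg⟩
  apply mem_inva
  have hinv2 : sigPlusK F k
      (ell3 F k hk4 * nrm F (2 * r + 3) k hk4 - ell2 F k hk4 ^ (r + 3)) =
      ell3 F k hk4 * nrm F (2 * r + 3) k hk4 - ell2 F k hk4 ^ (r + 3) := by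
    rw [map_sub, map_mul, map_pow, sig_ell3 hk4, sig_nrm hk4 hp, sig_ell2 hk4]
  rw [hg, map_mul] at hinv2
  rw [sig0 hk4] at hinv2
  exact mul_left_cancel₀ hx0 hinv2

lemma partCAux {k : ℕ} (hk4 : 4 ≤ k)
    (h1 : ell1 F k hk4 ∈ inva F (sigPlusK F k))
    (h2 : ell2 F k hk4 ∈ inva F (sigPlusK F k))
    (h3 : ell3 F k hk4 ∈ inva F (sigPlusK F k)) :
    (⟨ell3 F k hk4, h3⟩ : ↥(inva F (sigPlusK F k))) ∉
      Ideal.span {(⟨ell1 F k hk4, h1⟩ : ↥(inva F (sigPlusK F k))),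
        ⟨ell2 F k hk4, h2⟩} := by
  classical
  intro hmem
  obtain ⟨uR, vR, huv⟩ := Ideal.mem_span_pair.mp hmem
  have huv' : (uR : MvPolynomial (Fin k) F) * ell1 F k hk4 +
      (vR : MvPolynomial (Fin k) F) * ell2 F k hk4 = ell3 F k hk4 := by
    have := congrArg Subtype.val huv
    simpa using this
  have hv : sigPlusK F k (vR : MvPolynomial (Fin k) F) = (vR : MvPolynomial (Fin k) F) :=
    inva_spec vR.2
  have hx0 : (X (⟨0, by omega⟩ : Fin k) : MvPolynomial (Fin k) F) ≠ 0 := X_ne_zero _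
  set eps : MvPolynomial (Fin k) F →ₐ[F] MvPolynomial (Fin k) F :=
    aeval (fun i : Fin k => if i.1 = 0 then 0 else X i) with heps
  have h5 : eps (vR : MvPolynomial (Fin k) F) * X ⟨1, by omega⟩ ^ 2
      = X (⟨1, by omega⟩ : Fin k) ^ 3 := by
    have hc := congrArg eps huv'
    rw [ell1, ell2, ell3] at hc
    simp only [map_add, map_sub, map_mul, map_pow, map_ofNat, heps, aeval_X] at hc
    norm_num at hc
    exact hc
  have h6 : eps (vR : MvPolynomial (Fin k) F) = X ⟨1, by omega⟩ := by
    have hx1 : (X (⟨1, by omega⟩ : Fin k) : MvPolynomial (Fin k) F) ^ 2 ≠ 0 :=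
      pow_ne_zero _ (X_ne_zero _)
    exact mul_right_cancel₀ hx1 (h5.trans (by ring))
  obtain ⟨w, hw⟩ := X0_dvd_sub_eps (show 0 < k by omega) (vR : MvPolynomial (Fin k) F)
  rw [← heps] at hw
  rw [h6] at hw
  have hvx : (vR : MvPolynomial (Fin k) F) =
      X ⟨1, by omega⟩ + X ⟨0, by omega⟩ * w := by linear_combination hw
  have e := hv
  rw [hvx, map_add, map_mul, sig1 hk4, sig0 hk4] at e
  have hw1 : sigPlusK F k w = w - 1 := by
    apply mul_left_cancel₀ hx0
    linear_combination e
  have hzero : (1 : F) = 0 := by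
    have hcomp : (aeval (fun _ : Fin k => (0 : F))).comp (sigPlusK F k)
        = aeval (fun _ : Fin k => (0 : F)) := by
      apply MvPolynomial.algHom_ext
      intro i
      simp [sigPlusK, apply_ite]
    have hce := congrArg (aeval (fun _ : Fin k => (0 : F))) hw1
    rw [map_sub, map_one] at hce
    have hl : (aeval (fun _ : Fin k => (0 : F))) (sigPlusK F k w)
        = (aeval (fun _ : Fin k => (0 : F))) w := DFunLike.congr_fun hcomp w
    rw [hl] at hce
    linear_combination hce
  exact one_ne_zero hzero

end AuxLemmas

/-- in `R = F[V_k⁺]^{C_{2p}}` (with `4 ≤ k ≤ p`), the elements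
`ℓ₁, ℓ₂, ℓ₃, N` are invariant, `ℓ₃·N - ℓ₂^{(p+3)/2} ∈ (ℓ₁)R`, hence
`ℓ₃·N ∈ (ℓ₁, ℓ₂)R`, but `ℓ₃ ∉ (ℓ₁, ℓ₂)R`; consequently the algebraically
independent elements `ℓ₁, ℓ₂, N` do not form a regular sequence in `R`. -/
theorem stmt15 [IsAlgClosed F] (p : ℕ) (hp : Nat.Prime p) (hp2 : 2 < p) [CharP F p]
    (k : ℕ) (hk4 : 4 ≤ k) (hkp : k ≤ p) :
    ell1 F k hk4 ∈ inva F (sigPlusK F k) ∧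
    ell2 F k hk4 ∈ inva F (sigPlusK F k) ∧
    ell3 F k hk4 ∈ inva F (sigPlusK F k) ∧
    nrm F p k hk4 ∈ inva F (sigPlusK F k) ∧
    ∀ (h1 : ell1 F k hk4 ∈ inva F (sigPlusK F k))
      (h2 : ell2 F k hk4 ∈ inva F (sigPlusK F k))
      (h3 : ell3 F k hk4 ∈ inva F (sigPlusK F k))
      (hN : nrm F p k hk4 ∈ inva F (sigPlusK F k)),
      ((⟨ell3 F k hk4, h3⟩ : ↥(inva F (sigPlusK F k))) * ⟨nrm F p k hk4, hN⟩ -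
          (⟨ell2 F k hk4, h2⟩ : ↥(inva F (sigPlusK F k))) ^ ((p + 3) / 2) ∈
        Ideal.span {(⟨ell1 F k hk4, h1⟩ : ↥(inva F (sigPlusK F k)))}) ∧
      ((⟨ell3 F k hk4, h3⟩ : ↥(inva F (sigPlusK F k))) * ⟨nrm F p k hk4, hN⟩ ∈
        Ideal.span {(⟨ell1 F k hk4, h1⟩ : ↥(inva F (sigPlusK F k))),
          ⟨ell2 F k hk4, h2⟩}) ∧
      ((⟨ell3 F k hk4, h3⟩ : ↥(inva F (sigPlusK F k))) ∉
        Ideal.span {(⟨ell1 F k hk4, h1⟩ : ↥(inva F (sigPlusK F k))),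
          ⟨ell2 F k hk4, h2⟩}) ∧
      AlgebraicIndependent F
        ![(⟨ell1 F k hk4, h1⟩ : ↥(inva F (sigPlusK F k))),
          ⟨ell2 F k hk4, h2⟩, ⟨nrm F p k hk4, hN⟩] ∧
      ¬ RingTheory.Sequence.IsRegular (↥(inva F (sigPlusK F k)))
          [(⟨ell1 F k hk4, h1⟩ : ↥(inva F (sigPlusK F k))),
            ⟨ell2 F k hk4, h2⟩, ⟨nrm F p k hk4, hN⟩] := by
  classical
  haveI := Fact.mk hp
  refine ⟨mem_inva (sig_ell1 hk4), mem_inva (sig_ell2 hk4), mem_inva (sig_ell3 hk4),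
    mem_inva (sig_nrm hk4 hp), ?_⟩
  intro h1 h2 h3 hN
  obtain ⟨g, hg1, hg2⟩ := keyDvd (F := F) hk4 hp hp2
  have partA : (⟨ell3 F k hk4, h3⟩ : ↥(inva F (sigPlusK F k))) * ⟨nrm F p k hk4, hN⟩ -
      (⟨ell2 F k hk4, h2⟩ : ↥(inva F (sigPlusK F k))) ^ ((p + 3) / 2) ∈
        Ideal.span {(⟨ell1 F k hk4, h1⟩ : ↥(inva F (sigPlusK F k)))} := by
    refine Ideal.mem_span_singleton.mpr ⟨⟨g, hg1⟩, ?_⟩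
    apply Subtype.ext
    show ell3 F k hk4 * nrm F p k hk4 - ell2 F k hk4 ^ ((p + 3) / 2) = ell1 F k hk4 * g
    exact hg2
  have partB : (⟨ell3 F k hk4, h3⟩ : ↥(inva F (sigPlusK F k))) * ⟨nrm F p k hk4, hN⟩ ∈
      Ideal.span {(⟨ell1 F k hk4, h1⟩ : ↥(inva F (sigPlusK F k))), ⟨ell2 F k hk4, h2⟩} := by
    have hsum : (⟨ell3 F k hk4, h3⟩ : ↥(inva F (sigPlusK F k))) * ⟨nrm F p k hk4, hN⟩ =
        ((⟨ell3 F k hk4, h3⟩ : ↥(inva F (sigPlusK F k))) * ⟨nrm F p k hk4, hN⟩ -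
          (⟨ell2 F k hk4, h2⟩ : ↥(inva F (sigPlusK F k))) ^ ((p + 3) / 2)) +
          (⟨ell2 F k hk4, h2⟩ : ↥(inva F (sigPlusK F k))) ^ ((p + 3) / 2) := by ring
    rw [hsum]
    refine Ideal.add_mem _
      (Ideal.span_mono (Set.singleton_subset_iff.2 (Set.mem_insert _ _)) partA) ?_
    exact Ideal.pow_mem_of_mem _ (Ideal.subset_span (by simp)) _ (by omega)
  have partC := partCAux hk4 h1 h2 h3
  have partD : AlgebraicIndependent F
      ![(⟨ell1 F k hk4, h1⟩ : ↥(inva F (sigPlusK F k))),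
        ⟨ell2 F k hk4, h2⟩, ⟨nrm F p k hk4, hN⟩] := by
    apply AlgebraicIndependent.of_comp (inva F (sigPlusK F k)).val
    have hfam : ⇑(inva F (sigPlusK F k)).val ∘
        ![(⟨ell1 F k hk4, h1⟩ : ↥(inva F (sigPlusK F k))),
          ⟨ell2 F k hk4, h2⟩, ⟨nrm F p k hk4, hN⟩] =
        ![ell1 F k hk4, ell2 F k hk4, nrm F p k hk4] := by
      funext i
      fin_cases i <;> rfl
    rw [hfam]
    exact algIndAux hk4 hp hp2
  exact ⟨partA, partB, partC, partD, notRegAux partB partC⟩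

end
end
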